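/- arXiv:1210.6991 — 2 statements merged into one kernel-verified Lean document; each statement's English description precedes it below -/
import Mathlib

section
/- The number of Ramanujan primes in the interval (x/2, x], i.e. π_R(x) − π_R(x/2), tends to infinity as x → ∞. -/
open Real Filter

/-- Prime-counting function at a real argument. -/
noncomputable def pi' (x : ℝ) : ℕ := Nat.primeCounting ⌊x⌋₊

/-- The n-th Ramanujan prime: smallest positive integer R such that
π(x) − π(x/2) ≥ n for all real x ≥ R. -/
noncomputable def ramanujanPrime (n : ℕ) : ℕ :=
  sInf {R : ℕ | 0 < R ∧ ∀ x : ℝ, (R : ℝ) ≤ x → n ≤ pi' x - pi' (x / 2)}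

/-- A number is a Ramanujan prime if it is `ramanujanPrime n` for some `n ≥ 1`. -/
def IsRamanujanPrime (R : ℕ) : Prop := ∃ n : ℕ, 1 ≤ n ∧ ramanujanPrime n = R

/-- Ramanujan-prime-counting function. -/
noncomputable def piR (x : ℝ) : ℕ := {R : ℕ | IsRamanujanPrime R ∧ (R : ℝ) ≤ x}.ncard

/-- The n-th derived Ramanujan prime. -/
noncomputable def dRamanujanPrime (n : ℕ) : ℕ :=
  sInf {R : ℕ | 0 < R ∧ ∀ x : ℝ, (R : ℝ) ≤ x → n ≤ piR x - piR (x / 2)}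

/-- A number is a derived Ramanujan prime. -/
def IsDRamanujanPrime (R : ℕ) : Prop := ∃ n : ℕ, 1 ≤ n ∧ dRamanujanPrime n = R

/-- Derived-Ramanujan-prime-counting function. -/
noncomputable def piR' (x : ℝ) : ℕ := {R : ℕ | IsDRamanujanPrime R ∧ (R : ℝ) ≤ x}.ncard

section RamAuxSection
open Finset ArithmeticFunction
namespace RamAux


noncomputable def TT (n : ℕ) : ℝ := ∑ k ∈ Finset.range (n+1), Real.log k
noncomputable def psi (n : ℕ) : ℝ := ∑ k ∈ Finset.range (n+1), Λ k
noncomputable def theta (n : ℕ) : ℝ :=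
  ∑ p ∈ (Finset.range (n+1)).filter Nat.Prime, Real.log p

lemma psi_mono : Monotone psi := by
  intro a b hab
  exact Finset.sum_le_sum_of_subset_of_nonneg
    (Finset.range_subset_range.2 (by omega)) (fun i _ _ => vonMangoldt_nonneg)

lemma psi_nonneg (n : ℕ) : 0 ≤ psi n :=
  Finset.sum_nonneg fun i _ => vonMangoldt_nonneg

lemma TT_eq_sum_vonMangoldt (N : ℕ) :
    TT N = ∑ d ∈ Finset.range (N+1), Λ d * (N / d : ℕ) := by
  have hdiv : ∀ k ∈ Finset.range (N+1),
      k.divisors = (Finset.range (N+1)).filter (fun d => k ≠ 0 ∧ d ∣ k) := by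
    intro k hk
    rw [Finset.mem_range] at hk
    ext d
    simp only [Nat.mem_divisors, Finset.mem_filter, Finset.mem_range]
    constructor
    · rintro ⟨hdvd, hk0⟩
      exact ⟨lt_of_le_of_lt (Nat.le_of_dvd (Nat.pos_of_ne_zero hk0) hdvd) hk, hk0, hdvd⟩
    · rintro ⟨_, hk0, hdvd⟩; exact ⟨hdvd, hk0⟩
  calc TT N = ∑ k ∈ Finset.range (N+1), ∑ d ∈ k.divisors, Λ d := by
        apply Finset.sum_congr rfl
        intro k _
        rw [vonMangoldt_sum]
    _ = ∑ k ∈ Finset.range (N+1), ∑ d ∈ Finset.range (N+1),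
          if k ≠ 0 ∧ d ∣ k then Λ d else 0 := by
        apply Finset.sum_congr rfl
        intro k hk
        rw [hdiv k hk, Finset.sum_filter]
    _ = ∑ d ∈ Finset.range (N+1), ∑ k ∈ Finset.range (N+1),
          if k ≠ 0 ∧ d ∣ k then Λ d else 0 := Finset.sum_comm
    _ = ∑ d ∈ Finset.range (N+1), Λ d * (N / d : ℕ) := by
        apply Finset.sum_congr rfl
        intro d _
        rw [← Finset.sum_filter]
        rw [Finset.sum_const]
        rw [Nat.card_multiples' N d]
        simp [mul_comm]





noncomputable def EE (m : ℕ) : ℝ :=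
  (m : ℝ) - (m/2 : ℕ) - (m/3 : ℕ) - (m/5 : ℕ) + (m/30 : ℕ)

noncomputable def SS (N : ℕ) : ℝ := TT N - TT (N/2) - TT (N/3) - TT (N/5) + TT (N/30)

lemma EE_nonneg (m : ℕ) : 0 ≤ EE m := by
  have h : m/2 + m/3 + m/5 ≤ m + m/30 := by omega
  unfold EE
  have := Nat.cast_le (α := ℝ).2 h
  push_cast at this ⊢
  linarith

lemma EE_le_one (m : ℕ) : EE m ≤ 1 := by
  have h : m + m/30 ≤ m/2 + m/3 + m/5 + 1 := by omega
  unfold EE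
  have := Nat.cast_le (α := ℝ).2 h
  push_cast at this ⊢
  linarith

lemma EE_eq_one {m : ℕ} (h1 : 1 ≤ m) (h5 : m ≤ 5) : EE m = 1 := by
  have h : m + m/30 = m/2 + m/3 + m/5 + 1 := by omega
  unfold EE
  have := congrArg (fun t : ℕ => (t : ℝ)) h
  push_cast at this ⊢
  linarith

-- scaled version of TT_eq
lemma TT_div_eq (N c : ℕ) (hc : 0 < c) :
    TT (N / c) = ∑ d ∈ Finset.range (N+1), Λ d * (N / (c * d) : ℕ) := by
  rw [TT_eq_sum_vonMangoldt]
  have hsub : Finset.range (N/c+1) ⊆ Finset.range (N+1) :=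
    Finset.range_subset_range.2 (by have := Nat.div_le_self N c; omega)
  rw [Finset.sum_subset hsub]
  · apply Finset.sum_congr rfl
    intro d _
    rw [Nat.div_div_eq_div_mul]
  · intro d hd hd'
    rw [Finset.mem_range] at hd hd'
    have hdc : N / c < d := by omega
    have hlt : N < c * d := by
      have h := (Nat.div_lt_iff_lt_mul hc).1 hdc
      calc N < d * c := h
        _ = c * d := Nat.mul_comm d c
    rw [Nat.div_div_eq_div_mul, Nat.div_eq_of_lt hlt]
    simp

lemma SS_eq_sum (N : ℕ) :
    SS N = ∑ d ∈ Finset.range (N+1), Λ d * EE (N / d) := by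
  unfold SS
  rw [TT_eq_sum_vonMangoldt, TT_div_eq N 2 (by norm_num), TT_div_eq N 3 (by norm_num),
    TT_div_eq N 5 (by norm_num), TT_div_eq N 30 (by norm_num)]
  rw [← Finset.sum_sub_distrib, ← Finset.sum_sub_distrib, ← Finset.sum_sub_distrib,
    ← Finset.sum_add_distrib]
  apply Finset.sum_congr rfl
  intro d _
  have h2 : N / (2 * d) = (N / d) / 2 := by rw [Nat.div_div_eq_div_mul, mul_comm]
  have h3 : N / (3 * d) = (N / d) / 3 := by rw [Nat.div_div_eq_div_mul, mul_comm]
  have h5 : N / (5 * d) = (N / d) / 5 := by rw [Nat.div_div_eq_div_mul, mul_comm]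
  have h30 : N / (30 * d) = (N / d) / 30 := by rw [Nat.div_div_eq_div_mul, mul_comm]
  rw [h2, h3, h5, h30]
  unfold EE
  ring

lemma SS_le_psi (N : ℕ) : SS N ≤ psi N := by
  rw [SS_eq_sum]
  unfold psi
  apply Finset.sum_le_sum
  intro d _
  calc Λ d * EE (N/d) ≤ Λ d * 1 :=
        mul_le_mul_of_nonneg_left (EE_le_one _) vonMangoldt_nonneg
    _ = Λ d := mul_one _

lemma psi_sub_le_SS (N : ℕ) : psi N - psi (N / 6) ≤ SS N := by
  have hle : N/6 + 1 ≤ N + 1 := by have := Nat.div_le_self N 6; omega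
  have hsplit : psi N = psi (N/6) + ∑ d ∈ Finset.Ico (N/6+1) (N+1), Λ d := by
    unfold psi
    rw [Finset.range_eq_Ico,
      ← Finset.sum_Ico_consecutive _ (Nat.zero_le (N/6+1)) hle, Finset.range_eq_Ico]
  have htail : ∑ d ∈ Finset.Ico (N/6+1) (N+1), Λ d
      ≤ ∑ d ∈ Finset.range (N+1), Λ d * EE (N / d) := by
    have hsub : Finset.Ico (N/6+1) (N+1) ⊆ Finset.range (N+1) := by
      intro d hd
      rw [Finset.mem_Ico] at hd
      exact Finset.mem_range.2 hd.2
    calc ∑ d ∈ Finset.Ico (N/6+1) (N+1), Λ d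
        = ∑ d ∈ Finset.Ico (N/6+1) (N+1), Λ d * EE (N / d) := by
          apply Finset.sum_congr rfl
          intro d hd
          rw [Finset.mem_Ico] at hd
          have hd1 : 1 ≤ N / d := Nat.one_le_div_iff (by omega) |>.2 (by omega)
          have hd5 : N / d ≤ 5 := by
            have h6 : N < 6 * d := by omega
            have h7 : N / d < 6 := (Nat.div_lt_iff_lt_mul (show 0 < d by omega)).mpr h6
            omega
          rw [EE_eq_one hd1 hd5, mul_one]
      _ ≤ ∑ d ∈ Finset.range (N+1), Λ d * EE (N / d) := by
          apply Finset.sum_le_sum_of_subset_of_nonneg hsub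
          intro d _ _
          exact mul_nonneg vonMangoldt_nonneg (EE_nonneg _)
  rw [SS_eq_sum, hsplit]
  linarith




noncomputable def A : ℝ :=
  Real.log 2 / 2 + Real.log 3 / 3 + Real.log 5 / 5 - Real.log 30 / 30


noncomputable def gR (x : ℝ) : ℝ := x * Real.log x - x

lemma A_pos : 0 < A := by
  have h30 : Real.log 30 = Real.log 2 + Real.log 3 + Real.log 5 := by
    rw [show (30:ℝ) = 2*3*5 by norm_num, Real.log_mul (by norm_num) (by norm_num),
      Real.log_mul (by norm_num) (by norm_num)]
  have h2 : 0 < Real.log 2 := Real.log_pos (by norm_num)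
  have h3 : 0 < Real.log 3 := Real.log_pos (by norm_num)
  have h5 : 0 < Real.log 5 := Real.log_pos (by norm_num)
  unfold A
  rw [h30]
  linarith

lemma TT_log_factorial (n : ℕ) : TT n = Real.log (Nat.factorial n) := by
  induction n with
  | zero => simp [TT]
  | succ n ih =>
    unfold TT at *
    rw [Finset.sum_range_succ, ih, Nat.factorial_succ, Nat.cast_mul,
      Real.log_mul (by positivity) (by exact_mod_cast (Nat.factorial_pos n).ne')]
    ring

lemma TT_approx : ∀ᶠ (n:ℕ) in atTop, |TT n - gR n| ≤ 2 * Real.log n := by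
  have hπ1 : (1:ℝ) < Real.sqrt π := by
    rw [show (1:ℝ) = Real.sqrt 1 by simp]
    exact Real.sqrt_lt_sqrt (by norm_num) (by linarith [Real.pi_gt_three])
  have hπ2 : Real.sqrt π < 2 := by
    rw [show (2:ℝ) = Real.sqrt 4 by rw [show (4:ℝ) = 2^2 by norm_num, Real.sqrt_sq]; norm_num]
    exact Real.sqrt_lt_sqrt (by positivity) (by linarith [Real.pi_lt_d2])
  have h1 : ∀ᶠ n in atTop, 1 < Stirling.stirlingSeq n :=
    Stirling.tendsto_stirlingSeq_sqrt_pi.eventually_const_lt hπ1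
  have h2 : ∀ᶠ n in atTop, Stirling.stirlingSeq n < 2 :=
    Stirling.tendsto_stirlingSeq_sqrt_pi.eventually_lt_const hπ2
  filter_upwards [h1, h2, eventually_ge_atTop 2] with n hs1 hs2 hn2
  have hn0 : (0:ℝ) < n := by positivity
  have hfac : ((Nat.factorial n : ℕ) : ℝ) = Stirling.stirlingSeq n * (Real.sqrt (2*n) * ((n:ℝ)/Real.exp 1)^n) := by
    rw [Stirling.stirlingSeq]
    field_simp
  have hpos : (0:ℝ) < Real.sqrt (2*n) * ((n:ℝ)/Real.exp 1)^n := by positivity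
  have hlog : TT n = Real.log (Stirling.stirlingSeq n) + (Real.log 2 + Real.log n)/2
      + (n:ℝ) * Real.log n - n := by
    rw [TT_log_factorial, hfac, Real.log_mul (by linarith) hpos.ne',
      Real.log_mul (Real.sqrt_pos.2 (by positivity)).ne' (by positivity),
      Real.log_sqrt (by positivity), Real.log_mul (by norm_num) hn0.ne',
      Real.log_pow, Real.log_div hn0.ne' (Real.exp_pos 1).ne', Real.log_exp]
    ring
  have hls1 : 0 ≤ Real.log (Stirling.stirlingSeq n) := Real.log_nonneg (le_of_lt hs1)
  have hls2 : Real.log (Stirling.stirlingSeq n) ≤ Real.log 2 :=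
    Real.log_le_log (by linarith) (le_of_lt hs2)
  have hl2 : Real.log 2 ≤ Real.log n := Real.log_le_log (by norm_num) (by exact_mod_cast hn2)
  have hl2pos : 0 < Real.log 2 := Real.log_pos (by norm_num)
  rw [hlog]
  unfold gR
  rw [abs_le]
  constructor <;> nlinarith

lemma gR_compare {y z : ℝ} (hz : 1 ≤ z) (hzy : z ≤ y) (hy : y ≤ z + 1) :
    |gR y - gR z| ≤ Real.log y + 1 := by
  have hz0 : (0:ℝ) < z := by linarith
  have hy1 : (1:ℝ) ≤ y := by linarith
  have hy0 : (0:ℝ) < y := by linarith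
  have hdiv : Real.log y - Real.log z = Real.log (y/z) := (Real.log_div hy0.ne' hz0.ne').symm
  have hub : Real.log (y/z) ≤ y/z - 1 := Real.log_le_sub_one_of_pos (by positivity)
  have hlb : 0 ≤ Real.log (y/z) := Real.log_nonneg ((le_div_iff₀ hz0).2 (by linarith))
  have hylog : 0 ≤ Real.log y := Real.log_nonneg hy1
  have hzlog : Real.log z ≤ Real.log y := Real.log_le_log hz0 hzy
  have hkey : z * Real.log (y/z) ≤ y - z := by
    have := mul_le_mul_of_nonneg_left hub (le_of_lt hz0)
    calc z * Real.log (y/z) ≤ z * (y/z - 1) := this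
      _ = y - z := by field_simp
  have hexp : gR y - gR z = (y - z) * Real.log y + z * Real.log (y/z) - (y - z) := by
    unfold gR
    have : Real.log (y/z) = Real.log y - Real.log z := by rw [← hdiv]
    rw [this]
    ring
  rw [abs_le]
  constructor
  · nlinarith [mul_nonneg (sub_nonneg.2 hzy) hylog, mul_nonneg (le_of_lt hz0) hlb]
  · nlinarith [mul_le_mul_of_nonneg_right (show y - z ≤ 1 by linarith) hylog]

lemma TT_div_approx : ∀ᶠ (N:ℕ) in atTop, ∀ c : ℕ, 0 < c → c ≤ 30 → N/c ≥ 2 →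
    |TT (N/c) - gR ((N:ℝ)/c)| ≤ 3 * Real.log N + 1 := by
  obtain ⟨n₀, hn₀⟩ := eventually_atTop.1 TT_approx
  filter_upwards [eventually_ge_atTop (30*(n₀+2)), eventually_ge_atTop 2] with N hN hN2
  intro c hc hc30 hm2
  set m := N / c with hm
  have hmn₀ : m ≥ n₀ := by
    have : N / c ≥ N / 30 := Nat.div_le_div_left hc30 hc
    have h30 : N / 30 ≥ n₀ + 2 := by omega
    omega
  have h1 := hn₀ m hmn₀
  have hm1 : 1 ≤ m := by omega
  have hcR : (0:ℝ) < c := by exact_mod_cast hc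
  have hzy : (m:ℝ) ≤ (N:ℝ)/c := by
    rw [le_div_iff₀ hcR]
    exact_mod_cast Nat.div_mul_le_self N c
  have hy1 : (N:ℝ)/c ≤ (m:ℝ) + 1 := by
    rw [div_le_iff₀ hcR]
    push_cast
    have : N < (m + 1) * c := by
      have h3 := Nat.mod_lt N hc
      calc N = c * m + N % c := by rw [hm]; exact (Nat.div_add_mod N c).symm
        _ < c * m + c := by omega
        _ = (m+1) * c := by ring
    exact_mod_cast le_of_lt this
  have h2 := gR_compare (by exact_mod_cast hm1) hzy hy1
  have hlogm : Real.log m ≤ Real.log N := by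
    apply Real.log_le_log (by exact_mod_cast hm1)
    exact_mod_cast Nat.div_le_self N c
  have hlogNc : Real.log ((N:ℝ)/c) ≤ Real.log N := by
    apply Real.log_le_log (by exact_mod_cast lt_of_lt_of_le one_pos (by exact_mod_cast hzy.trans' (by exact_mod_cast hm1)))
    calc (N:ℝ)/c ≤ (N:ℝ)/1 := by
          apply div_le_div_of_nonneg_left (by positivity) (by norm_num) (by exact_mod_cast hc)
      _ = N := by ring
  calc |TT m - gR ((N:ℝ)/c)|
      ≤ |TT m - gR m| + |gR m - gR ((N:ℝ)/c)| := abs_sub_le _ _ _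
    _ ≤ 2 * Real.log m + (Real.log ((N:ℝ)/c) + 1) := by
        rw [abs_sub_comm (gR m)]
        exact add_le_add h1 h2
    _ ≤ 3 * Real.log N + 1 := by linarith

lemma gR_identity {x : ℝ} (hx : 0 < x) :
    gR x - gR (x/2) - gR (x/3) - gR (x/5) + gR (x/30) = A * x := by
  unfold gR A
  rw [Real.log_div hx.ne' (by norm_num), Real.log_div hx.ne' (by norm_num),
    Real.log_div hx.ne' (by norm_num), Real.log_div hx.ne' (by norm_num)]
  ring

lemma SS_approx : ∀ᶠ (N:ℕ) in atTop, |SS N - A * N| ≤ 20 * Real.log N + 20 := by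
  obtain ⟨n₁, hn₁⟩ := eventually_atTop.1 TT_div_approx
  filter_upwards [eventually_ge_atTop (max n₁ 100)] with N hN
  have hNn₁ : N ≥ n₁ := le_trans (le_max_left _ _) hN
  have hN100 : N ≥ 100 := le_trans (le_max_right _ _) hN
  have h := hn₁ N hNn₁
  have h1 := h 1 (by norm_num) (by norm_num) (by omega)
  have h2 := h 2 (by norm_num) (by norm_num) (by omega)
  have h3 := h 3 (by norm_num) (by norm_num) (by omega)
  have h5 := h 5 (by norm_num) (by norm_num) (by omega)
  have h30 := h 30 (by norm_num) (by norm_num) (by omega)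
  have hx : (0:ℝ) < N := by positivity
  have hid := gR_identity hx
  simp only [Nat.div_one, Nat.cast_one, div_one] at h1
  push_cast at h1 h2 h3 h5 h30
  unfold SS
  rw [abs_le] at h1 h2 h3 h5 h30 ⊢
  constructor <;> linarith [h1.1, h1.2, h2.1, h2.2, h3.1, h3.2, h5.1, h5.2, h30.1, h30.2]





lemma psi_lower : ∀ᶠ (N:ℕ) in atTop, A * N - (20 * Real.log N + 20) ≤ psi N := by
  filter_upwards [SS_approx] with N h
  rw [abs_le] at h
  linarith [SS_le_psi N]

lemma psi_upper : ∃ B : ℝ, 0 < B ∧ ∀ N : ℕ, psi N ≤ 6/5 * A * N + B * (Real.log N)^2 + B := by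
  obtain ⟨n₂', hn₂⟩ := eventually_atTop.1 SS_approx
  set n₂ := max n₂' 36 with hn₂def
  have hkey : ∀ N ≥ n₂, psi N - psi (N/6) ≤ A * N + 20 * Real.log N + 20 := by
    intro N hN
    have h := hn₂ N (le_trans (le_max_left _ _) hN)
    rw [abs_le] at h
    linarith [psi_sub_le_SS N]
  set B := max 40 (psi n₂) with hBdef
  have hB40 : (40:ℝ) ≤ B := le_max_left _ _
  have hBpos : 0 < B := lt_of_lt_of_le (by norm_num) hB40
  refine ⟨B, hBpos, ?_⟩
  intro N
  induction N using Nat.strong_induction_on with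
  | _ N ih =>
    rcases lt_or_ge N n₂ with hlt | hge
    · have h1 : psi N ≤ psi n₂ := psi_mono (le_of_lt hlt)
      have h2 : psi n₂ ≤ B := le_max_right _ _
      have h3 : (0:ℝ) ≤ 6/5 * A * N :=
        mul_nonneg (mul_nonneg (by norm_num) A_pos.le) (Nat.cast_nonneg N)
      nlinarith [sq_nonneg (Real.log N), hBpos.le]
    · -- N ≥ n₂ ≥ 36
      have hN36 : (36:ℕ) ≤ N := le_trans (le_max_right _ _) hge
      have hrec := hkey N hge
      have hih := ih (N/6) (Nat.div_lt_self (by omega) (by norm_num))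
      -- cast facts
      have hc1 : ((N/6 : ℕ):ℝ) ≤ (N:ℝ)/6 := by
        rw [le_div_iff₀ (by norm_num : (0:ℝ) < 6)]
        exact_mod_cast Nat.div_mul_le_self N 6
      have hylog : Real.log (N/6 : ℕ) ≤ Real.log N - Real.log 6 := by
        have h6 : ((N/6:ℕ):ℝ) ≤ (N:ℝ)/6 := hc1
        calc Real.log (N/6 : ℕ) ≤ Real.log ((N:ℝ)/6) := by
              apply Real.log_le_log (by exact_mod_cast Nat.div_pos (by omega) (by norm_num)) h6
          _ = Real.log N - Real.log 6 := Real.log_div (by positivity) (by norm_num)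
      have hlog6 : (1:ℝ) ≤ Real.log 6 := by
        rw [Real.le_log_iff_exp_le (by norm_num)]
        calc Real.exp 1 ≤ 2.7182818286 := (Real.exp_one_lt_d9).le
          _ ≤ 6 := by norm_num
      have hlogN : Real.log 6 ≤ Real.log N := by
        apply Real.log_le_log (by norm_num)
        exact_mod_cast (by omega : (6:ℕ) ≤ N)
      have hlogNnn : (1:ℝ) ≤ Real.log N := le_trans hlog6 hlogN
      have hlognn : 0 ≤ Real.log (N/6:ℕ) := Real.log_natCast_nonneg _
      have hsq : (Real.log (N/6:ℕ))^2 ≤ (Real.log N - Real.log 6)^2 := by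
        apply sq_le_sq' (by linarith) hylog
      have hAlin : 6/5 * A * ((N/6:ℕ):ℝ) ≤ 6/5 * A * ((N:ℝ)/6) := by
        apply mul_le_mul_of_nonneg_left hc1 (by linarith [A_pos])
      have hstep : B * (Real.log N - Real.log 6)^2 + 20 * Real.log N + 20 ≤ B * (Real.log N)^2 := by
        have expand : (Real.log N)^2 - (Real.log N - Real.log 6)^2
            = 2 * Real.log 6 * Real.log N - (Real.log 6)^2 := by ring
        have h1 : (Real.log 6)^2 ≤ Real.log 6 * Real.log N := by nlinarith
        have h2 : Real.log 6 * Real.log N ≥ Real.log N := by nlinarith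
        nlinarith
      have hA6 : 6/5 * A * ((N:ℝ)/6) + A * N = 6/5 * A * N := by ring
      calc psi N ≤ psi (N/6) + A * N + 20 * Real.log N + 20 := by linarith
        _ ≤ (6/5 * A * ((N/6:ℕ):ℝ) + B * (Real.log (N/6:ℕ))^2 + B)
              + A * N + 20 * Real.log N + 20 := by linarith
        _ ≤ (6/5 * A * ((N:ℝ)/6) + B * (Real.log N - Real.log 6)^2 + B)
              + A * N + 20 * Real.log N + 20 := by
              have := mul_le_mul_of_nonneg_left hsq hBpos.le
              linarith
        _ ≤ 6/5 * A * N + B * (Real.log N)^2 + B := by linarith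

lemma theta_le_psi (N : ℕ) : theta N ≤ psi N := by
  unfold theta psi
  calc ∑ p ∈ (Finset.range (N+1)).filter Nat.Prime, Real.log p
      = ∑ p ∈ (Finset.range (N+1)).filter Nat.Prime, Λ p := by
        apply Finset.sum_congr rfl
        intro p hp
        rw [Finset.mem_filter] at hp
        rw [vonMangoldt_apply_prime hp.2]
    _ ≤ ∑ k ∈ Finset.range (N+1), Λ k := by
        apply Finset.sum_le_sum_of_subset_of_nonneg (Finset.filter_subset _ _)
        intro k _ _
        exact vonMangoldt_nonneg

lemma psi_sub_theta : ∀ᶠ (N:ℕ) in atTop,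
    psi N - theta N ≤ 2 * Real.sqrt N * (Real.log N)^2 := by
  filter_upwards [eventually_ge_atTop 2] with N hN
  have hsplit : psi N = theta N + ∑ k ∈ (Finset.range (N+1)).filter (fun k => ¬ k.Prime), Λ k := by
    unfold psi
    rw [← Finset.sum_filter_add_sum_filter_not (Finset.range (N+1)) Nat.Prime]
    congr 1
    unfold theta
    apply Finset.sum_congr rfl
    intro p hp
    rw [Finset.mem_filter] at hp
    rw [vonMangoldt_apply_prime hp.2]
  rw [hsplit]
  have hsum : ∑ k ∈ (Finset.range (N+1)).filter (fun k => ¬ k.Prime), Λ k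
      = ∑ k ∈ ((Finset.range (N+1)).filter (fun k => ¬ k.Prime)).filter (fun k => Λ k ≠ 0), Λ k := by
    rw [Finset.sum_filter_ne_zero]
  set s := ((Finset.range (N+1)).filter (fun k => ¬ k.Prime)).filter (fun k => Λ k ≠ 0) with hs
  have hsub : s ⊆ ((Finset.Icc 2 (Nat.sqrt N)) ×ˢ (Finset.Icc 2 (Nat.log 2 N))).image
      (fun q : ℕ × ℕ => q.1 ^ q.2) := by
    intro k hk
    rw [hs, Finset.mem_filter, Finset.mem_filter, Finset.mem_range] at hk
    obtain ⟨⟨hkN, hknp⟩, hkΛ⟩ := hk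
    obtain ⟨p, j, hp, hj, hpj⟩ := vonMangoldt_ne_zero_iff.1 hkΛ
    have hpnat : p.Prime := Nat.prime_iff.2 hp
    have hj2 : 2 ≤ j := by
      by_contra hcon
      have hj1 : j = 1 := by omega
      subst hj1
      rw [pow_one] at hpj
      exact hknp (hpj ▸ hpnat)
    have hp2 : 2 ≤ p := hpnat.two_le
    have hkN' : k ≤ N := by omega
    have hpsq : p ≤ Nat.sqrt N := by
      rw [Nat.le_sqrt]
      calc p * p = p^2 := (sq p).symm
        _ ≤ p^j := Nat.pow_le_pow_right (by omega) hj2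
        _ = k := hpj
        _ ≤ N := hkN'
    have hjlog : j ≤ Nat.log 2 N := by
      apply (Nat.le_log_iff_pow_le (by norm_num) (by omega)).2
      calc 2^j ≤ p^j := Nat.pow_le_pow_left hp2 j
        _ = k := hpj
        _ ≤ N := hkN'
    apply Finset.mem_image.2
    exact ⟨⟨p, j⟩, Finset.mem_product.2 ⟨Finset.mem_Icc.2 ⟨hp2, hpsq⟩,
      Finset.mem_Icc.2 ⟨hj2, hjlog⟩⟩, hpj⟩
  have hcard : s.card ≤ Nat.sqrt N * Nat.log 2 N := by
    calc s.card ≤ _ := Finset.card_le_card hsub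
      _ ≤ ((Finset.Icc 2 (Nat.sqrt N)) ×ˢ (Finset.Icc 2 (Nat.log 2 N))).card :=
          Finset.card_image_le
      _ ≤ Nat.sqrt N * Nat.log 2 N := by
          rw [Finset.card_product, Nat.card_Icc, Nat.card_Icc]
          exact Nat.mul_le_mul (by omega) (by omega)
  have hterm : ∀ k ∈ s, Λ k ≤ Real.log N := by
    intro k hk
    rw [hs, Finset.mem_filter, Finset.mem_filter, Finset.mem_range] at hk
    calc Λ k ≤ Real.log k := vonMangoldt_le_log
      _ ≤ Real.log N := by
          rcases Nat.eq_zero_or_pos k with h0 | hpos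
          · rw [h0]
            simpa using Real.log_natCast_nonneg N
          · exact Real.log_le_log (by exact_mod_cast hpos) (by exact_mod_cast (by omega : k ≤ N))
  have hbound : ∑ k ∈ s, Λ k ≤ (s.card : ℝ) * Real.log N := by
    calc ∑ k ∈ s, Λ k ≤ ∑ _k ∈ s, Real.log N := Finset.sum_le_sum hterm
      _ = (s.card : ℝ) * Real.log N := by rw [Finset.sum_const, nsmul_eq_mul]
  have hsqrtcast : ((Nat.sqrt N : ℕ):ℝ) ≤ Real.sqrt N := by
    have hsq2 : ((Nat.sqrt N : ℕ):ℝ)^2 ≤ (N:ℝ) := by exact_mod_cast Nat.sqrt_le' N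
    calc ((Nat.sqrt N : ℕ):ℝ) = Real.sqrt (((Nat.sqrt N : ℕ):ℝ)^2) :=
          (Real.sqrt_sq (Nat.cast_nonneg _)).symm
      _ ≤ Real.sqrt N := Real.sqrt_le_sqrt hsq2
  have hlogcast : ((Nat.log 2 N : ℕ):ℝ) ≤ 2 * Real.log N := by
    have h0 : (2:ℕ)^(Nat.log 2 N) ≤ N := Nat.pow_log_le_self 2 (by omega)
    have h1 : (2:ℝ)^(Nat.log 2 N) ≤ (N:ℝ) := by exact_mod_cast h0
    have h2 : (Nat.log 2 N : ℝ) * Real.log 2 ≤ Real.log N := by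
      rw [← Real.log_pow]
      exact Real.log_le_log (by positivity) h1
    have h3 : (0.6931471803:ℝ) < Real.log 2 := Real.log_two_gt_d9
    have h4 : (0:ℝ) ≤ (Nat.log 2 N : ℝ) := Nat.cast_nonneg _
    have h5 : (1:ℝ) ≤ (N:ℝ) := by exact_mod_cast (by omega : 1 ≤ N)
    have h6 : (0:ℝ) ≤ Real.log N := Real.log_nonneg h5
    nlinarith
  have hlogNnn : (0:ℝ) ≤ Real.log N :=
    Real.log_nonneg (by exact_mod_cast (by omega : 1 ≤ N))
  have hcardR : (s.card : ℝ) ≤ Real.sqrt N * (2 * Real.log N) := by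
    calc (s.card : ℝ) ≤ ((Nat.sqrt N * Nat.log 2 N : ℕ) : ℝ) := by exact_mod_cast hcard
      _ = ((Nat.sqrt N : ℕ):ℝ) * ((Nat.log 2 N : ℕ):ℝ) := by push_cast; ring
      _ ≤ Real.sqrt N * (2 * Real.log N) := by
          apply mul_le_mul hsqrtcast hlogcast (by positivity) (by positivity)
  rw [hsum]
  have hring : theta N + ∑ k ∈ s, Λ k - theta N = ∑ k ∈ s, Λ k := by ring
  rw [hring]
  calc ∑ k ∈ s, Λ k ≤ (s.card : ℝ) * Real.log N := hbound
    _ ≤ (Real.sqrt N * (2 * Real.log N)) * Real.log N := by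
        apply mul_le_mul_of_nonneg_right hcardR hlogNnn
    _ = 2 * Real.sqrt N * (Real.log N)^2 := by ring




/-- The number of primes in `(n/2, n]`. -/
def Fc (n : ℕ) : ℕ := Nat.primeCounting n - Nat.primeCounting (n/2)

lemma primeCounting_eq_card (n : ℕ) :
    Nat.primeCounting n = ((Finset.range (n+1)).filter Nat.Prime).card := by
  rw [Nat.primeCounting, Nat.primeCounting', Nat.count_eq_card_filter_range]

lemma range_split (n : ℕ) :
    Finset.range (n+1) = Finset.range (n/2+1) ∪ Finset.Ico (n/2+1) (n+1) := by
  rw [Finset.range_eq_Ico, Finset.range_eq_Ico]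
  rw [Finset.Ico_union_Ico_eq_Ico (Nat.zero_le _) (by omega)]

lemma pc_split (n : ℕ) : Nat.primeCounting n = Nat.primeCounting (n/2)
    + ((Finset.Ico (n/2+1) (n+1)).filter Nat.Prime).card := by
  rw [primeCounting_eq_card, primeCounting_eq_card, range_split n, Finset.filter_union]
  rw [Finset.card_union_of_disjoint]
  apply Finset.disjoint_filter_filter
  rw [Finset.range_eq_Ico]
  exact Finset.Ico_disjoint_Ico_consecutive 0 (n/2+1) (n+1)

lemma Fc_card (n : ℕ) : Fc n = ((Finset.Ico (n/2+1) (n+1)).filter Nat.Prime).card := by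
  unfold Fc
  rw [pc_split n]
  omega

lemma Fc_le (n : ℕ) : Fc n ≤ n := by
  rw [Fc_card]
  calc ((Finset.Ico (n/2+1) (n+1)).filter Nat.Prime).card
      ≤ (Finset.Ico (n/2+1) (n+1)).card := Finset.card_filter_le _ _
    _ ≤ n := by rw [Nat.card_Ico]; omega

lemma theta_split (n : ℕ) : theta n = theta (n/2)
    + ∑ p ∈ (Finset.Ico (n/2+1) (n+1)).filter Nat.Prime, Real.log p := by
  unfold theta
  rw [range_split n, Finset.filter_union, Finset.sum_union]
  apply Finset.disjoint_filter_filter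
  rw [Finset.range_eq_Ico]
  exact Finset.Ico_disjoint_Ico_consecutive 0 (n/2+1) (n+1)

lemma theta_diff_le (n : ℕ) (hn : 1 ≤ n) :
    theta n - theta (n/2) ≤ (Fc n : ℝ) * Real.log n := by
  rw [theta_split n, Fc_card]
  have h : ∑ p ∈ (Finset.Ico (n/2+1) (n+1)).filter Nat.Prime, Real.log p
      ≤ ∑ _p ∈ (Finset.Ico (n/2+1) (n+1)).filter Nat.Prime, Real.log n := by
    apply Finset.sum_le_sum
    intro p hp
    rw [Finset.mem_filter, Finset.mem_Ico] at hp
    exact Real.log_le_log (by exact_mod_cast hp.2.pos) (by exact_mod_cast (by omega : p ≤ n))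
  rw [Finset.sum_const, nsmul_eq_mul] at h
  linarith

lemma le_theta_diff (n : ℕ) (hn : 2 ≤ n) :
    (Fc n : ℝ) * (Real.log n - Real.log 2) ≤ theta n - theta (n/2) := by
  rw [theta_split n, Fc_card]
  have h : ∑ _p ∈ (Finset.Ico (n/2+1) (n+1)).filter Nat.Prime, (Real.log n - Real.log 2)
      ≤ ∑ p ∈ (Finset.Ico (n/2+1) (n+1)).filter Nat.Prime, Real.log p := by
    apply Finset.sum_le_sum
    intro p hp
    rw [Finset.mem_filter, Finset.mem_Ico] at hp
    have hp2 : (p:ℝ) ≥ (n:ℝ)/2 := by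
      have : 2 * p ≥ n := by omega
      have := (Nat.cast_le (α := ℝ)).2 this
      push_cast at this
      linarith
    calc Real.log n - Real.log 2 = Real.log ((n:ℝ)/2) :=
          (Real.log_div (by positivity) (by norm_num)).symm
      _ ≤ Real.log p := Real.log_le_log
          (div_pos (by exact_mod_cast (show 0 < n by omega)) two_pos) hp2
  rw [Finset.sum_const, nsmul_eq_mul] at h
  linarith





/-- all our error terms are `o(n)`. -/
lemma err_small (a b c d ε : ℝ) (hε : 0 < ε) :
    ∀ᶠ (n:ℕ) in atTop,
      a * Real.sqrt n * (Real.log n)^2 + b * (Real.log n)^2 + c * Real.log n + d ≤ ε * n := by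
  have hsqrt : (fun x:ℝ => Real.sqrt x * (Real.log x)^2) =o[atTop] (fun x:ℝ => x) := by
    have h1 : (fun x:ℝ => (Real.log x)^2) =o[atTop] (fun x:ℝ => x ^ (1/2 : ℝ)) := by
      have h := isLittleO_log_rpow_rpow_atTop (((2:ℕ):ℝ)) (by norm_num : (0:ℝ) < 1/2)
      have e : (fun x:ℝ => Real.log x ^ (((2:ℕ):ℝ))) = (fun x:ℝ => (Real.log x)^(2:ℕ)) := by
        funext x; rw [Real.rpow_natCast]
      rwa [e] at h
    have h2 : (fun x:ℝ => Real.sqrt x) =O[atTop] (fun x:ℝ => x ^ (1/2:ℝ)) := by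
      apply Asymptotics.IsBigO.of_bound 1
      filter_upwards [eventually_ge_atTop (0:ℝ)] with x hx
      rw [Real.sqrt_eq_rpow]
      simp [abs_of_nonneg (Real.rpow_nonneg hx _)]
    have h3 := h2.mul_isLittleO h1
    apply h3.congr'
    · filter_upwards with x; rfl
    · filter_upwards [eventually_gt_atTop (0:ℝ)] with x hx
      rw [← Real.rpow_add hx]
      norm_num
  have hlog2 : (fun x:ℝ => (Real.log x)^2) =o[atTop] (fun x:ℝ => x) := by
    have h := isLittleO_log_rpow_rpow_atTop (((2:ℕ):ℝ)) (by norm_num : (0:ℝ) < 1)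
    have e : (fun x:ℝ => Real.log x ^ (((2:ℕ):ℝ))) = (fun x:ℝ => (Real.log x)^(2:ℕ)) := by
      funext x; rw [Real.rpow_natCast]
    have e2 : (fun x:ℝ => x ^ (1:ℝ)) = (fun x:ℝ => x) := by
      funext x; rw [Real.rpow_one]
    rw [e, e2] at h
    exact h
  have hlog : (fun x:ℝ => Real.log x) =o[atTop] (fun x:ℝ => x) := by
    have h := isLittleO_log_rpow_atTop (by norm_num : (0:ℝ) < 1)
    have e2 : (fun x:ℝ => x ^ (1:ℝ)) = (fun x:ℝ => x) := by
      funext x; rw [Real.rpow_one]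
    rw [e2] at h
    exact h
  have hconst : (fun _x:ℝ => (1:ℝ)) =o[atTop] (fun x:ℝ => x) := by
    have h := Asymptotics.isLittleO_const_id_atTop (1:ℝ)
    exact h
  have htot : (fun x:ℝ => a * (Real.sqrt x * (Real.log x)^2) + (b * (Real.log x)^2
      + (c * Real.log x + d * 1))) =o[atTop] (fun x:ℝ => x) := by
    exact ((hsqrt.const_mul_left a).add ((hlog2.const_mul_left b).add
      ((hlog.const_mul_left c).add (hconst.const_mul_left d))))
  have hev := htot.def hε
  have := tendsto_natCast_atTop_atTop (R := ℝ)
  filter_upwards [this.eventually hev, eventually_ge_atTop 1] with n hn hn1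
  have hx : (1:ℝ) ≤ (n:ℝ) := by exact_mod_cast hn1
  rw [Real.norm_eq_abs, Real.norm_eq_abs] at hn
  have key := le_abs_self (a * (Real.sqrt n * (Real.log n)^2) + (b * (Real.log n)^2
        + (c * Real.log n + d * 1)))
  calc a * Real.sqrt n * (Real.log n)^2 + b * (Real.log n)^2 + c * Real.log n + d
      = a * (Real.sqrt n * (Real.log n)^2) + (b * (Real.log n)^2
        + (c * Real.log n + d * 1)) := by ring
    _ ≤ |a * (Real.sqrt n * (Real.log n)^2) + (b * (Real.log n)^2
        + (c * Real.log n + d * 1))| := key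
    _ ≤ ε * |(n:ℝ)| := hn
    _ = ε * n := by rw [abs_of_nonneg (by linarith)]

lemma cast_half_le (n : ℕ) : ((n/2 : ℕ):ℝ) ≤ (n:ℝ)/2 := by
  rw [le_div_iff₀ (by norm_num : (0:ℝ) < 2)]
  exact_mod_cast Nat.div_mul_le_self n 2

lemma half_cast_le (n : ℕ) : (n:ℝ)/2 - 1 ≤ ((n/2 : ℕ):ℝ) := by
  have h : n ≤ 2 * (n/2) + 1 := by omega
  have := (Nat.cast_le (α := ℝ)).2 h
  push_cast at this
  linarith

lemma log_half_le (n : ℕ) (hn : 2 ≤ n) : Real.log ((n/2:ℕ)) ≤ Real.log n := by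
  apply Real.log_le_log (by exact_mod_cast Nat.div_pos (by omega) (by norm_num))
  exact_mod_cast Nat.div_le_self n 2

lemma log_half_sq_le (n : ℕ) (hn : 2 ≤ n) :
    (Real.log ((n/2:ℕ)))^2 ≤ (Real.log n)^2 := by
  have h1 := log_half_le n hn
  have h2 : 0 ≤ Real.log ((n/2:ℕ)) := Real.log_natCast_nonneg _
  nlinarith

lemma sqrt_half_le (n : ℕ) : Real.sqrt ((n/2:ℕ)) ≤ Real.sqrt n :=
  Real.sqrt_le_sqrt (by exact_mod_cast Nat.div_le_self n 2)

lemma Fl : ∀ᶠ (n:ℕ) in atTop, 38/100*A*(n:ℝ) ≤ (Fc n:ℝ) * Real.log n := by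
  obtain ⟨B, hBpos, hBub⟩ := psi_upper
  have herr := err_small 2 B 20 (B + 20) (2/100*A) (by linarith [A_pos])
  filter_upwards [psi_lower, psi_sub_theta, herr, eventually_ge_atTop 2] with n hψl hψθ herr hn2
  have h1 : theta n ≥ psi n - 2 * Real.sqrt n * (Real.log n)^2 := by linarith
  have h2 : theta (n/2) ≤ psi (n/2) := theta_le_psi (n/2)
  have h3 : psi (n/2) ≤ 6/5 * A * ((n/2:ℕ):ℝ) + B * (Real.log (n/2:ℕ))^2 + B := hBub (n/2)
  have h4 : 6/5 * A * ((n/2:ℕ):ℝ) ≤ 6/5 * A * ((n:ℝ)/2) :=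
    mul_le_mul_of_nonneg_left (cast_half_le n) (by linarith [A_pos])
  have h5 : B * (Real.log (n/2:ℕ))^2 ≤ B * (Real.log n)^2 :=
    mul_le_mul_of_nonneg_left (log_half_sq_le n hn2) hBpos.le
  have h6 := theta_diff_le n (by omega)
  -- θ n - θ(n/2) ≥ (2/5) A n - err
  have key : theta n - theta (n/2)
      ≥ 2/5 * A * n - (2 * Real.sqrt n * (Real.log n)^2 + B * (Real.log n)^2
        + 20 * Real.log n + (B + 20)) := by
    linarith [h1, h2, h3, h4, h5, hψl]
  linarith [herr, h6, key]

lemma Fu : ∀ᶠ (n:ℕ) in atTop, (Fc n:ℝ) * Real.log n ≤ 72/100*A*(n:ℝ) := by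
  obtain ⟨B, hBpos, hBub⟩ := psi_upper
  have herr := err_small 2 B 20 (B + 20 + A) (1/100*A) (by linarith [A_pos])
  obtain ⟨n₄, hn₄⟩ := eventually_atTop.1 psi_lower
  obtain ⟨n₅, hn₅⟩ := eventually_atTop.1 psi_sub_theta
  have hlar : ∀ᶠ (n:ℕ) in atTop, Real.log n ≥ 72 * Real.log 2 := by
    have h2 : Tendsto (fun n:ℕ => Real.log n) atTop atTop :=
      Real.tendsto_log_atTop.comp (tendsto_natCast_atTop_atTop)
    exact h2.eventually_ge_atTop _
  filter_upwards [herr, hlar, eventually_ge_atTop (2*n₄ + 2*n₅ + 4)] with n herr hlar hnbig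
  have hn2 : 2 ≤ n := by omega
  have hhalf4 : n/2 ≥ n₄ := by omega
  have hhalf5 : n/2 ≥ n₅ := by omega
  have hψl2 := hn₄ (n/2) hhalf4
  have hψθ2 := hn₅ (n/2) hhalf5
  -- θ n ≤ ψ n ≤ upper
  have h1 : theta n ≤ 6/5 * A * n + B * (Real.log n)^2 + B :=
    le_trans (theta_le_psi n) (hBub n)
  -- θ (n/2) ≥ ψ(n/2) - 2√(n/2) log²(n/2) ≥ A(n/2) - A - 20 log n - 20 - 2√n log²n
  have h2 : theta (n/2) ≥ A * ((n:ℝ)/2) - A - 20 * Real.log n - 20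
      - 2 * Real.sqrt n * (Real.log n)^2 := by
    have e1 : A * ((n/2:ℕ):ℝ) ≥ A * ((n:ℝ)/2 - 1) :=
      mul_le_mul_of_nonneg_left (half_cast_le n) A_pos.le
    have e2 : Real.log ((n/2:ℕ)) ≤ Real.log n := log_half_le n hn2
    have e3 : 2 * Real.sqrt ((n/2:ℕ)) * (Real.log ((n/2:ℕ)))^2
        ≤ 2 * Real.sqrt n * (Real.log n)^2 := by
      have s1 := sqrt_half_le n
      have s2 := log_half_sq_le n hn2
      have s3 : 0 ≤ Real.sqrt ((n/2:ℕ):ℝ) := Real.sqrt_nonneg _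
      have s4 : 0 ≤ (Real.log ((n/2:ℕ)))^2 := sq_nonneg _
      have := mul_le_mul s1 s2 s4 (Real.sqrt_nonneg (n:ℝ))
      linarith
    nlinarith [e1, e2, e3, hψl2, hψθ2]
  have h6 := le_theta_diff n hn2
  set L := Real.log n with hL
  have hLpos : 0 < L := Real.log_pos (by exact_mod_cast (by omega : 1 < n))
  have hlog2pos : 0 < Real.log 2 := Real.log_pos (by norm_num)
  have hD : 0 < L - Real.log 2 := by
    have : Real.log 2 ≤ L / 72 := by
      rw [le_div_iff₀ (by norm_num : (0:ℝ) < 72)]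
      linarith
    linarith
  -- X := 7/10 A n + err'
  have hkey : (Fc n : ℝ) * (L - Real.log 2)
      ≤ 7/10 * A * n + (2 * Real.sqrt n * (Real.log n)^2 + B * (Real.log n)^2
        + 20 * Real.log n + (B + 20 + A)) := by
    linarith [h1, h2, h6]
  have herr' : (2 * Real.sqrt n * (Real.log n)^2 + B * (Real.log n)^2
      + 20 * Real.log n + (B + 20 + A)) ≤ 1/100*A*n := herr
  have hann : (0:ℝ) ≤ A * (n:ℝ) := mul_nonneg A_pos.le (Nat.cast_nonneg _)
  have hX : (Fc n : ℝ) * (L - Real.log 2) ≤ 71/100 * (A * (n:ℝ)) := by linarith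
  have e2 : ((Fc n : ℝ) * (L - Real.log 2)) * L ≤ (71/100 * (A * (n:ℝ))) * L :=
    mul_le_mul_of_nonneg_right hX hLpos.le
  have h72 : 0 ≤ (A * (n:ℝ)) * (L - 72 * Real.log 2) := mul_nonneg hann (by linarith)
  have e4 : ((Fc n:ℝ) * L) * (L - Real.log 2) ≤ (72/100 * (A * (n:ℝ))) * (L - Real.log 2) := by
    nlinarith [e2, h72]
  have hfin := le_of_mul_le_mul_right e4 hD
  linarith [hfin]





lemma Fc_tendsto : Tendsto Fc atTop atTop := by
  rw [tendsto_atTop]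
  intro K
  have herr := err_small 0 0 (K+1) 1 (38/100*A) (by linarith [A_pos])
  filter_upwards [Fl, herr, eventually_ge_atTop 2] with n hFl herr hn2
  have hL : 0 < Real.log n := Real.log_pos (by exact_mod_cast (by omega : 1 < n))
  have h1 : ((K:ℝ)+1) * Real.log n ≤ 38/100*A*(n:ℝ) := by
    have : (0:ℝ) ≤ (Real.log n)^2 := sq_nonneg _
    nlinarith [herr]
  have h2 : ((K:ℝ)+1) * Real.log n ≤ (Fc n:ℝ) * Real.log n := le_trans h1 hFl
  have h3 : ((K:ℝ)+1) ≤ (Fc n:ℝ) := le_of_mul_le_mul_right (by linarith) hL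
  exact_mod_cast le_trans (by linarith : (K:ℝ) ≤ (K:ℝ)+1) h3

lemma pc_succ (n : ℕ) : Nat.primeCounting (n+1)
    = Nat.primeCounting n + if Nat.Prime (n+1) then 1 else 0 := by
  rw [primeCounting_eq_card, primeCounting_eq_card, Finset.range_add_one, Finset.filter_insert]
  by_cases h : Nat.Prime (n+1)
  · rw [if_pos h, if_pos h, Finset.card_insert_of_notMem (by simp)]
  · rw [if_neg h, if_neg h, add_zero]

lemma pc_mono : Monotone Nat.primeCounting := Nat.monotone_primeCounting

lemma Fc_two : Fc 2 = 1 := by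
  have h2 : Nat.primeCounting 2 = 1 := by
    rw [primeCounting_eq_card]
    decide
  have h1 : Nat.primeCounting 1 = 0 := by
    rw [primeCounting_eq_card]
    decide
  unfold Fc
  rw [show (2:ℕ)/2 = 1 by norm_num, h2, h1]

lemma Fc_one : Fc 1 = 0 := by
  have h1 : Nat.primeCounting 1 = 0 := by
    rw [primeCounting_eq_card]; decide
  have h0 : Nat.primeCounting 0 = 0 := by
    rw [primeCounting_eq_card]; decide
  unfold Fc
  rw [show (1:ℕ)/2 = 0 by norm_num, h1, h0]

lemma Fc_jump (R : ℕ) : Fc (R+1) ≤ Fc R + 1 := by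
  by_cases hp : Nat.Prime (R+1)
  · rcases Nat.even_or_odd (R+1) with he | ho
    · -- even prime: R+1 = 2
      have h2 : R + 1 = 2 := (Nat.Prime.even_iff hp).1 he
      have hR : R = 1 := by omega
      rw [h2, hR, Fc_two, Fc_one]
    · -- R+1 odd, R even : (R+1)/2 = R/2
      have hhalf : (R+1)/2 = R/2 := by
        rcases ho with ⟨t, ht⟩
        omega
      unfold Fc
      rw [pc_succ, if_pos hp, hhalf]
      have := pc_mono (Nat.div_le_self R 2)
      omega
  · unfold Fc
    rw [pc_succ, if_neg hp]
    have h1 := pc_mono (show R/2 ≤ (R+1)/2 by omega)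
    have h2 := pc_mono (Nat.div_le_self R 2)
    omega

def RSet (n : ℕ) : Set ℕ := {R : ℕ | 0 < R ∧ ∀ N : ℕ, R ≤ N → n ≤ Fc N}

lemma RSet_nonempty (n : ℕ) : (RSet n).Nonempty := by
  obtain ⟨X, hX⟩ := eventually_atTop.1 (tendsto_atTop.1 Fc_tendsto n)
  exact ⟨X + 1, by omega, fun N hN => hX N (by omega)⟩

noncomputable def rp (n : ℕ) : ℕ := sInf (RSet n)

lemma rp_mem (n : ℕ) : rp n ∈ RSet n := Nat.sInf_mem (RSet_nonempty n)

lemma rp_pos (n : ℕ) : 0 < rp n := (rp_mem n).1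

lemma rp_spec (n : ℕ) : ∀ N : ℕ, rp n ≤ N → n ≤ Fc N := (rp_mem n).2

lemma rp_mono : Monotone rp := by
  intro a b hab
  apply Nat.sInf_le
  exact ⟨(rp_mem b).1, fun N hN => le_trans hab ((rp_mem b).2 N hN)⟩

lemma le_rp (n : ℕ) : n ≤ rp n :=
  le_trans (rp_spec n (rp n) le_rfl) (Fc_le (rp n))

lemma rp_strict (n : ℕ) : rp n < rp (n+1) := by
  set R := rp (n+1) with hR
  have hmem := rp_mem (n+1)
  have hR2 : 2 ≤ R := by
    rcases Nat.lt_or_ge R 2 with h | h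
    · exfalso
      have hpos := rp_pos (n+1)
      have h1 : R = 1 := by omega
      have := hmem.2 1 (by omega)
      rw [Fc_one] at this
      omega
    · exact h
  have hlt1 : R - 1 < rp (n+1) := by omega
  have hnotmem : R - 1 ∉ RSet (n+1) := Nat.notMem_of_lt_sInf hlt1
  have hFcR1 : Fc (R-1) ≤ n := by
    by_contra hcon
    push_neg at hcon
    apply hnotmem
    refine ⟨by omega, fun N hN => ?_⟩
    rcases Nat.lt_or_ge N R with h | h
    · have hNe : N = R - 1 := by omega
      rw [hNe]
      omega
    · exact hmem.2 N h
  have hjump : Fc R ≤ Fc (R-1) + 1 := by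
    have := Fc_jump (R-1)
    rw [show R - 1 + 1 = R by omega] at this
    exact this
  have hFcn : n ≤ Fc (R - 1) := by
    have hFcRn : n + 1 ≤ Fc R := hmem.2 R le_rfl
    omega
  have : rp n ≤ R - 1 := by
    apply Nat.sInf_le
    refine ⟨by omega, fun N hN => ?_⟩
    rcases Nat.lt_or_ge N R with h | h
    · have hNe : N = R - 1 := by omega
      rw [hNe]
      omega
    · exact le_trans (by omega) (hmem.2 N h)
  omega

lemma rp_strictMono : StrictMono rp :=
  strictMono_nat_of_lt_succ rp_strict

lemma div_log_mono {x y : ℝ} (hx : 3 ≤ x) (hxy : x ≤ y) :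
    x / Real.log x ≤ y / Real.log y := by
  have key : MonotoneOn (fun t : ℝ => t / Real.log t) (Set.Ici 3) := by
    have hderiv : ∀ t ∈ interior (Set.Ici (3:ℝ)),
        HasDerivAt (fun t : ℝ => t / Real.log t)
          ((Real.log t - 1) / (Real.log t)^2) t := by
      intro t ht
      rw [interior_Ici, Set.mem_Ioi] at ht
      have ht0 : (0:ℝ) < t := by linarith
      have hlt : Real.log t ≠ 0 := by
        have : 0 < Real.log t := Real.log_pos (by linarith)
        linarith
      have h1 : HasDerivAt (fun t : ℝ => t) 1 t := hasDerivAt_id t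
      have h2 : HasDerivAt Real.log t⁻¹ t := Real.hasDerivAt_log ht0.ne'
      have := h1.div h2 hlt
      exact this.congr_deriv (by rw [one_mul, mul_inv_cancel₀ ht0.ne'])
    apply monotoneOn_of_deriv_nonneg (convex_Ici 3)
    · apply ContinuousOn.div continuousOn_id
      · apply Real.continuousOn_log.mono
        intro t ht
        simp only [Set.mem_Ici] at ht
        simp only [Set.mem_compl_iff, Set.mem_singleton_iff]
        intro h
        rw [h] at ht; norm_num at ht
      · intro t ht
        simp only [Set.mem_Ici] at ht
        have : 0 < Real.log t := Real.log_pos (by linarith)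
        linarith
    · intro t ht
      exact ((hderiv t ht).differentiableAt).differentiableWithinAt
    · intro t ht
      rw [(hderiv t ht).deriv]
      rw [interior_Ici, Set.mem_Ioi] at ht
      have h1 : 1 ≤ Real.log t := by
        rw [Real.le_log_iff_exp_le (by linarith)]
        calc Real.exp 1 ≤ 2.7182818286 := Real.exp_one_lt_d9.le
          _ ≤ t := by linarith
      exact div_nonneg (by linarith) (sq_nonneg _)
  exact key (by simpa using hx) (by simp; linarith) hxy





lemma log_tendsto : Tendsto (fun n:ℕ => Real.log n) atTop atTop :=
  Real.tendsto_log_atTop.comp tendsto_natCast_atTop_atTop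

lemma gap_ev (k : ℕ) : ∀ᶠ (R:ℕ) in atTop,
    72/100*A*(R:ℝ)/Real.log R + k ≤ 76/100*A*(R:ℝ)/Real.log (2*(R:ℝ)) := by
  have herr := err_small 0 0 (2*k) 0 (2/100*A) (by linarith [A_pos])
  filter_upwards [herr, log_tendsto.eventually_ge_atTop (36 * Real.log 2),
    eventually_ge_atTop 2] with R herr hlar hR2
  set L := Real.log R with hL
  have hR1 : (1:ℝ) ≤ (R:ℝ) := by exact_mod_cast (by omega : 1 ≤ R)
  have hLpos : 0 < L := Real.log_pos (by exact_mod_cast (by omega : 1 < R))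
  have hM : Real.log (2*(R:ℝ)) = Real.log 2 + L := Real.log_mul (by norm_num) (by linarith)
  have hlog2pos : 0 < Real.log 2 := Real.log_pos (by norm_num)
  have hMpos : 0 < Real.log 2 + L := by linarith
  have hlog2L : Real.log 2 ≤ L := by nlinarith
  rw [hM]
  rw [div_add' _ _ _ hLpos.ne', div_le_div_iff₀ hLpos hMpos]
  -- (72/100 A R + k L)(log2 + L) ≤ 76/100 A R L
  have hAR : (0:ℝ) ≤ A * R := mul_nonneg A_pos.le (by positivity)
  have e1 : 72/100*A*(R:ℝ)*Real.log 2 ≤ 2/100*A*(R:ℝ)*L := by nlinarith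
  have e2 : (k:ℝ)*L*(Real.log 2 + L) ≤ 2*(k:ℝ)*L*L := by
    have hkL : 0 ≤ (k:ℝ)*L := mul_nonneg (Nat.cast_nonneg _) hLpos.le
    have := mul_le_mul_of_nonneg_left hlog2L hkL
    nlinarith [this]
  have e3 : 2*(k:ℝ)*L*L ≤ (2/100*A*(R:ℝ))*L := by
    have h0 : 0 * Real.sqrt R * (Real.log R)^2 + 0 * (Real.log R)^2
        + (2*k) * Real.log R + 0 ≤ 2/100*A*R := herr
    have h1 : 2*(k:ℝ)*L ≤ 2/100*A*R := by linarith [h0]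
    nlinarith
  nlinarith [e1, e2, e3]

lemma rp_double (k : ℕ) : ∀ᶠ (m:ℕ) in atTop, rp (m + k) ≤ 2 * rp m := by
  obtain ⟨n₆, hn₆⟩ := eventually_atTop.1 Fu
  obtain ⟨n₇, hn₇⟩ := eventually_atTop.1 Fl
  obtain ⟨n₈, hn₈⟩ := eventually_atTop.1 (gap_ev k)
  filter_upwards [eventually_ge_atTop (n₆ + n₇ + n₈ + 2)] with m hm
  set R := rp m with hR
  have hRm : m ≤ R := le_rp m
  have hR2 : 2 ≤ R := by omega
  have ht3 : (3:ℝ) ≤ 2*(R:ℝ) := by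
    have : (2:ℝ) ≤ (R:ℝ) := by exact_mod_cast hR2
    linarith
  have hLpos : 0 < Real.log R := Real.log_pos (by exact_mod_cast (by omega : 1 < R))
  -- m ≤ 0.72 A R / log R
  have h1 : (Fc R:ℝ) * Real.log R ≤ 72/100*A*(R:ℝ) := hn₆ R (by omega)
  have h2 : (m:ℝ) ≤ (Fc R:ℝ) := by exact_mod_cast rp_spec m R le_rfl
  have h3 : (m:ℝ) * Real.log R ≤ 72/100*A*(R:ℝ) :=
    le_trans (mul_le_mul_of_nonneg_right h2 hLpos.le) h1
  have h4 : (m:ℝ) ≤ 72/100*A*(R:ℝ)/Real.log R := (le_div_iff₀ hLpos).2 h3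
  have h5 : (m:ℝ) + k ≤ 76/100*A*(R:ℝ)/Real.log (2*(R:ℝ)) := by
    have := hn₈ R (by omega)
    linarith
  -- now show 2R ∈ RSet (m+k)
  have hmem : 2 * R ∈ RSet (m + k) := by
    refine ⟨by omega, fun N hN => ?_⟩
    have hNR : (2*(R:ℝ)) ≤ (N:ℝ) := by exact_mod_cast hN
    have hNpos : (3:ℝ) ≤ (N:ℝ) := le_trans ht3 hNR
    have hLN : 0 < Real.log N := Real.log_pos (by linarith)
    have hFlN : 38/100*A*(N:ℝ) ≤ (Fc N:ℝ) * Real.log N := by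
      apply hn₇ N
      omega
    have hmono : (2*(R:ℝ))/Real.log (2*(R:ℝ)) ≤ (N:ℝ)/Real.log N :=
      div_log_mono ht3 hNR
    have h6 : (m:ℝ) + k ≤ 38/100*A*((N:ℝ)/Real.log N) := by
      have e : 76/100*A*(R:ℝ)/Real.log (2*(R:ℝ))
          = 38/100*A*((2*(R:ℝ))/Real.log (2*(R:ℝ))) := by ring
      rw [e] at h5
      have := mul_le_mul_of_nonneg_left hmono (by linarith [A_pos] : (0:ℝ) ≤ 38/100*A)
      linarith
    have h7 : ((m:ℝ) + k) * Real.log N ≤ 38/100*A*(N:ℝ) := by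
      have := mul_le_mul_of_nonneg_right h6 hLN.le
      have e2 : 38/100*A*((N:ℝ)/Real.log N) * Real.log N = 38/100*A*(N:ℝ) := by
        field_simp
      linarith [this, e2.le, e2.ge]
    have h8 : ((m:ℝ) + k) * Real.log N ≤ (Fc N:ℝ) * Real.log N := le_trans h7 hFlN
    have h9 : ((m:ℝ) + k) ≤ (Fc N:ℝ) := le_of_mul_le_mul_right h8 hLN
    exact_mod_cast h9
  exact Nat.sInf_le hmem





/-- The Ramanujan-prime condition transfers from reals to naturals. -/
lemma cond_iff (n R : ℕ) :
    (0 < R ∧ ∀ x : ℝ, (R : ℝ) ≤ x → n ≤ pi' x - pi' (x / 2)) ↔ R ∈ RSet n := by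
  have hpi : ∀ x : ℝ, pi' x - pi' (x/2) = Fc ⌊x⌋₊ := by
    intro x
    unfold pi' Fc
    congr 1
    rw [show (2:ℝ) = ((2:ℕ):ℝ) by norm_num, Nat.floor_div_natCast]
  constructor
  · rintro ⟨hpos, h⟩
    refine ⟨hpos, fun N hN => ?_⟩
    have := h N (by exact_mod_cast hN)
    rw [hpi] at this
    rwa [Nat.floor_natCast] at this
  · rintro ⟨hpos, h⟩
    refine ⟨hpos, fun x hx => ?_⟩
    rw [hpi]
    apply h
    exact Nat.le_floor hx

lemma ramanujanPrime_eq_rp (n : ℕ) : ramanujanPrime n = rp n := by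
  unfold ramanujanPrime rp
  congr 1
  ext R
  exact cond_iff n R

lemma isRP_iff (R : ℕ) : IsRamanujanPrime R ↔ ∃ n : ℕ, 1 ≤ n ∧ rp n = R := by
  unfold IsRamanujanPrime
  simp_rw [ramanujanPrime_eq_rp]

/-- Nat-level Ramanujan-prime counting. -/
noncomputable def G (M : ℕ) : ℕ := {R : ℕ | IsRamanujanPrime R ∧ R ≤ M}.ncard

def idxSet (M : ℕ) : Set ℕ := {n : ℕ | 1 ≤ n ∧ rp n ≤ M}

lemma idxSet_sub (M : ℕ) : idxSet M ⊆ Set.Icc 1 M :=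
  fun n hn => ⟨hn.1, le_trans (le_rp n) hn.2⟩

lemma idxSet_finite (M : ℕ) : (idxSet M).Finite :=
  Set.Finite.subset (Set.finite_Icc 1 M) (idxSet_sub M)

lemma G_eq (M : ℕ) : G M = (idxSet M).ncard := by
  unfold G
  have himg : {R : ℕ | IsRamanujanPrime R ∧ R ≤ M} = rp '' (idxSet M) := by
    ext R
    simp only [Set.mem_setOf_eq, Set.mem_image, isRP_iff]
    constructor
    · rintro ⟨⟨n, hn1, hnR⟩, hRM⟩
      exact ⟨n, ⟨hn1, by omega⟩, hnR⟩
    · rintro ⟨n, ⟨hn1, hnM⟩, hnR⟩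
      exact ⟨⟨n, hn1, hnR⟩, by omega⟩
  rw [himg, Set.ncard_image_of_injective _ rp_strictMono.injective]

lemma ncard_Icc (a b : ℕ) : (Set.Icc a b).ncard = b + 1 - a := by
  rw [← Finset.coe_Icc, Set.ncard_coe_finset, Nat.card_Icc]

lemma G_ge (M j : ℕ) (hj : 1 ≤ j) (h : rp j ≤ M) : j ≤ G M := by
  rw [G_eq]
  have hsub : Set.Icc 1 j ⊆ idxSet M := by
    intro i hi
    rw [Set.mem_Icc] at hi
    exact ⟨hi.1, le_trans (rp_mono hi.2) h⟩
  calc j = (Set.Icc 1 j).ncard := by rw [ncard_Icc]; omega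
    _ ≤ (idxSet M).ncard := Set.ncard_le_ncard hsub (idxSet_finite M)

lemma rp_G_le (M : ℕ) (hM : 1 ≤ G M) : rp (G M) ≤ M := by
  rw [G_eq] at hM ⊢
  set S := idxSet M with hS
  have hfin := idxSet_finite M
  have hne : S.Nonempty := by
    rcases S.eq_empty_or_nonempty with h | h
    · rw [h, Set.ncard_empty] at hM; omega
    · exact h
  have hbdd : BddAbove S := hfin.bddAbove
  set nstar := sSup S with hnstar
  have hmem : nstar ∈ S := Nat.sSup_mem hne hbdd
  have hsub : S ⊆ Set.Icc 1 nstar := by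
    intro i hi
    exact ⟨hi.1, le_csSup hbdd hi⟩
  have hcard : S.ncard ≤ nstar := by
    calc S.ncard ≤ (Set.Icc 1 nstar).ncard := Set.ncard_le_ncard hsub (Set.finite_Icc _ _)
      _ = nstar := by rw [ncard_Icc]; omega
  exact le_trans (rp_mono hcard) hmem.2

lemma G_half_tendsto : Tendsto (fun N : ℕ => G (N/2)) atTop atTop := by
  rw [tendsto_atTop]
  intro j
  rcases Nat.eq_zero_or_pos j with hj | hj
  · filter_upwards with N; omega
  filter_upwards [eventually_ge_atTop (2 * rp j)] with N hN
  exact G_ge (N/2) j hj (by omega)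

lemma G_diff_tendsto : Tendsto (fun N : ℕ => G N - G (N/2)) atTop atTop := by
  rw [tendsto_atTop]
  intro k
  obtain ⟨M₀, hM₀⟩ := eventually_atTop.1 (rp_double k)
  filter_upwards [G_half_tendsto.eventually_ge_atTop (M₀ + 1)] with N hN
  set m := G (N/2) with hm
  have hm1 : 1 ≤ m := by omega
  have h1 : rp m ≤ N/2 := rp_G_le (N/2) hm1
  have h2 : rp (m + k) ≤ 2 * rp m := hM₀ m (by omega)
  have h3 : rp (m + k) ≤ N := by omega
  have h4 : m + k ≤ G N := G_ge N (m+k) (by omega) h3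
  omega

end RamAux
end RamAuxSection

theorem piR_diff_tendsto_atTop :
    Tendsto (fun x : ℝ => piR x - piR (x / 2)) atTop atTop := by

  have hpiR : ∀ x : ℝ, 0 ≤ x → piR x = RamAux.G ⌊x⌋₊ := by
    intro x hx
    unfold piR RamAux.G
    congr 1
    ext R
    simp only [Set.mem_setOf_eq, and_congr_right_iff]
    intro _
    exact (Nat.le_floor_iff hx).symm
  have hcongr : ∀ᶠ x : ℝ in atTop,
      piR x - piR (x/2) = (fun N : ℕ => RamAux.G N - RamAux.G (N/2)) ⌊x⌋₊ := by
    filter_upwards [eventually_ge_atTop (0:ℝ)] with x hx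
    have h2 : piR (x/2) = RamAux.G (⌊x⌋₊/2) := by
      rw [hpiR (x/2) (by linarith)]
      congr 1
      rw [show (2:ℝ) = ((2:ℕ):ℝ) by norm_num, Nat.floor_div_natCast]
    rw [hpiR x hx, h2]
  have hcomp : Tendsto (fun x : ℝ => (fun N : ℕ => RamAux.G N - RamAux.G (N/2)) ⌊x⌋₊) atTop atTop :=
    RamAux.G_diff_tendsto.comp tendsto_nat_floor_atTop
  exact hcomp.congr' (by filter_upwards [hcongr] with x h; rw [h])
end

section
/- Let k, l be positive integers. The inequality R_k + R_l ≤ R_{k+l−1} holds if and only if for all x, y with R_{k−1} ≤ x < R_k and R_{l−1} ≤ y < R_l, one has π_R(x + y) ≤ π_R(x) + π_R(y). -/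
open Real Filter

section RamanujanAux
open Real Filter Asymptotics Finset


/-- number of primes in (n, 2n] -/
def tprime (n : ℕ) : ℕ := ((Finset.Ico (n+1) (2*n+1)).filter Nat.Prime).card

lemma pc_split (n : ℕ) :
    Nat.primeCounting (2*n) = Nat.primeCounting n + tprime n := by
  unfold Nat.primeCounting Nat.primeCounting' tprime
  rw [Nat.count_eq_card_filter_range, Nat.count_eq_card_filter_range,
    Finset.range_eq_Ico, Finset.range_eq_Ico,
    ← Finset.Ico_union_Ico_eq_Ico (Nat.zero_le (n+1)) (by omega : n+1 ≤ 2*n+1),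
    Finset.filter_union, Finset.card_union_of_disjoint]
  exact Finset.disjoint_filter_filter (p := Nat.Prime) (q := Nat.Prime) (Finset.Ico_disjoint_Ico_consecutive 0 (n+1) (2*n+1))

lemma centralBinom_le_tprime (n : ℕ) (n_big : 2 < n) :
    Nat.centralBinom n ≤ (2*n) ^ Nat.sqrt (2*n) * 4 ^ (2*n/3) * (2*n) ^ tprime n := by
  have n_pos : 0 < n := by omega
  have n2_pos : 1 ≤ 2 * n := by omega
  set f : ℕ → ℕ := fun x => x ^ (Nat.centralBinom n).factorization x with hf
  have key : Nat.centralBinom n =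
      (∏ x ∈ Finset.range (2*n/3+1), f x) * ∏ x ∈ Finset.Ico (2*n/3+1) (2*n+1), f x := by
    rw [← n.prod_pow_factorization_centralBinom, Finset.range_eq_Ico, Finset.range_eq_Ico,
      Finset.prod_Ico_consecutive _ (Nat.zero_le (2*n/3+1)) (by omega : 2*n/3+1 ≤ 2*n+1)]
  have first : (∏ x ∈ Finset.range (2*n/3+1), f x) ≤ (2*n) ^ Nat.sqrt (2*n) * 4 ^ (2*n/3) := by
    set S := (Finset.range (2 * n / 3 + 1)).filter Nat.Prime with hS
    have hSe : ∏ x ∈ S, f x = ∏ x ∈ Finset.range (2 * n / 3 + 1), f x := by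
      refine Finset.prod_filter_of_ne fun p _ h => ?_
      contrapose! h; dsimp only [f]
      rw [Nat.factorization_eq_zero_of_not_prime n.centralBinom h, pow_zero]
    rw [← hSe, ← Finset.prod_filter_mul_prod_filter_not S (· ≤ Nat.sqrt (2 * n))]
    apply Nat.mul_le_mul
    · refine (Finset.prod_le_prod' fun p _ => (?_ : f p ≤ 2 * n)).trans ?_
      · exact Nat.pow_factorization_choose_le (by omega)
      have hcard : (Finset.Icc 1 (Nat.sqrt (2 * n))).card = Nat.sqrt (2 * n) := by
        rw [Nat.card_Icc, Nat.add_sub_cancel]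
      rw [Finset.prod_const]
      refine pow_right_mono₀ n2_pos ((Finset.card_le_card fun x hx => ?_).trans hcard.le)
      obtain ⟨h1, h2⟩ := Finset.mem_filter.1 hx
      exact Finset.mem_Icc.mpr ⟨(Finset.mem_filter.1 h1).2.one_lt.le, h2⟩
    · refine le_trans ?_ (primorial_le_4_pow (2 * n / 3))
      refine (Finset.prod_le_prod' fun p hp => (?_ : f p ≤ p)).trans ?_
      · obtain ⟨h1, h2⟩ := Finset.mem_filter.1 hp
        refine (pow_right_mono₀ (Finset.mem_filter.1 h1).2.one_lt.le ?_).trans (pow_one p).le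
        exact Nat.factorization_choose_le_one (Nat.sqrt_lt'.mp <| not_le.1 h2)
      refine Finset.prod_le_prod_of_subset_of_one_le' (Finset.filter_subset _ _) ?_
      exact fun p hp _ => (Finset.mem_filter.1 hp).2.one_lt.le
  have second : (∏ x ∈ Finset.Ico (2*n/3+1) (2*n+1), f x) ≤ (2*n) ^ tprime n := by
    have h1 : ∏ x ∈ (Finset.Ico (2*n/3+1) (2*n+1)).filter (fun x => n < x ∧ x.Prime), f x
        = ∏ x ∈ Finset.Ico (2*n/3+1) (2*n+1), f x := by
      refine Finset.prod_filter_of_ne fun p hp h => ?_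
      rw [Finset.mem_Ico] at hp
      by_contra hc
      push_neg at hc
      apply h
      dsimp only [f]
      by_cases hpp : p.Prime
      · have hpn : p ≤ n := le_of_not_gt fun hlt => hc hlt hpp
        rw [Nat.factorization_centralBinom_of_two_mul_self_lt_three_mul n_big hpn (by omega),
          pow_zero]
      · rw [Nat.factorization_eq_zero_of_not_prime _ hpp, pow_zero]
    rw [← h1]
    calc ∏ x ∈ (Finset.Ico (2*n/3+1) (2*n+1)).filter (fun x => n < x ∧ x.Prime), f x
        ≤ ∏ _x ∈ (Finset.Ico (2*n/3+1) (2*n+1)).filter (fun x => n < x ∧ x.Prime), 2*n :=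
          Finset.prod_le_prod' fun p _ => Nat.pow_factorization_choose_le (by omega)
      _ = (2*n) ^ ((Finset.Ico (2*n/3+1) (2*n+1)).filter (fun x => n < x ∧ x.Prime)).card :=
          Finset.prod_const _
      _ ≤ (2*n) ^ tprime n := by
          refine pow_right_mono₀ n2_pos (Finset.card_le_card ?_)
          intro x hx
          simp only [tprime, Finset.mem_filter, Finset.mem_Ico] at hx ⊢
          exact ⟨⟨by omega, hx.1.2⟩, hx.2.2⟩
  calc Nat.centralBinom n = _ := key
    _ ≤ ((2*n) ^ Nat.sqrt (2*n) * 4 ^ (2*n/3)) * ((2*n) ^ tprime n) := Nat.mul_le_mul first second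
    _ = _ := by ring

lemma littleo_total (c : ℕ) :
    (fun x : ℝ => Real.log x + Real.sqrt (2*x) * Real.log (2*x) + c * Real.log (2*x))
      =o[atTop] (fun x : ℝ => x) := by
  have htwo : Tendsto (fun x : ℝ => 2 * x) atTop atTop :=
    (tendsto_id.const_mul_atTop (by norm_num))
  have h2x : (fun x : ℝ => 2 * x) =O[atTop] (fun x : ℝ => x) :=
    (isBigO_refl (fun x : ℝ => x) atTop).const_mul_left 2
  have h1 : (fun x : ℝ => Real.log x) =o[atTop] (fun x : ℝ => x) := Real.isLittleO_log_id_atTop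
  have hsl : (fun y : ℝ => Real.sqrt y * Real.log y) =o[atTop] (fun y : ℝ => y) := by
    have hlog : Real.log =o[atTop] fun y : ℝ => y ^ ((1:ℝ)/2) :=
      isLittleO_log_rpow_atTop (by norm_num)
    have := (isBigO_refl (fun y : ℝ => Real.sqrt y) atTop).mul_isLittleO hlog
    refine this.congr' (EventuallyEq.refl _ _) ?_
    filter_upwards [eventually_ge_atTop (0:ℝ)] with y hy
    rw [← Real.sqrt_eq_rpow, Real.mul_self_sqrt hy]
  have h2 : (fun x : ℝ => Real.sqrt (2*x) * Real.log (2*x)) =o[atTop] (fun x : ℝ => x) :=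
    (hsl.comp_tendsto htwo).trans_isBigO h2x
  have h3 : (fun x : ℝ => (c:ℝ) * Real.log (2*x)) =o[atTop] (fun x : ℝ => x) :=
    ((h1.comp_tendsto htwo).trans_isBigO h2x).const_mul_left _
  exact (h1.add h2).add h3

lemma real_eventual (c : ℕ) :
    ∀ᶠ x : ℝ in atTop, x * (2*x) ^ Real.sqrt (2*x) * 4 ^ (2*x/3) * (2*x) ^ c ≤ 4 ^ x := by
  have hb := (littleo_total c).def (show (0:ℝ) < Real.log 4 / 3 by
    have := Real.log_pos (by norm_num : (1:ℝ) < 4); linarith)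
  filter_upwards [hb, eventually_ge_atTop (1:ℝ)] with x hx hx1
  have hx0 : (0:ℝ) < x := by linarith
  have h2x0 : (0:ℝ) < 2 * x := by linarith
  have hL : Real.log x + Real.sqrt (2*x) * Real.log (2*x) + c * Real.log (2*x)
      ≤ Real.log 4 / 3 * x := by
    calc _ ≤ ‖Real.log x + Real.sqrt (2*x) * Real.log (2*x) + c * Real.log (2*x)‖ :=
          le_norm_self _
      _ ≤ Real.log 4 / 3 * ‖x‖ := hx
      _ = Real.log 4 / 3 * x := by rw [Real.norm_of_nonneg hx0.le]
  have e1 : x * (2*x) ^ Real.sqrt (2*x) * 4 ^ (2*x/3) * (2*x) ^ c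
      = Real.exp (Real.log x + Real.log (2*x) * Real.sqrt (2*x) + Real.log 4 * (2*x/3)
          + c * Real.log (2*x)) := by
    rw [Real.exp_add, Real.exp_add, Real.exp_add, Real.exp_log hx0,
      ← Real.rpow_def_of_pos h2x0, ← Real.rpow_def_of_pos (by norm_num : (0:ℝ) < 4),
      ← Real.rpow_natCast (2*x) c, mul_comm (c:ℝ)]
    rw [Real.rpow_def_of_pos h2x0 (c:ℝ)]
  have e2 : (4:ℝ) ^ x = Real.exp (Real.log 4 * x) := by
    rw [← Real.rpow_def_of_pos (by norm_num : (0:ℝ) < 4)]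
  rw [e1, e2, Real.exp_le_exp]
  nlinarith [Real.log_pos (by norm_num : (1:ℝ) < 4)]

lemma nat_eventual (c : ℕ) : ∀ᶠ n : ℕ in atTop,
    n * (2*n) ^ Nat.sqrt (2*n) * 4 ^ (2*n/3) * (2*n) ^ c ≤ 4 ^ n := by
  have hcast : Tendsto (fun n : ℕ => (n:ℝ)) atTop atTop := tendsto_natCast_atTop_atTop
  filter_upwards [hcast.eventually (real_eventual c), eventually_ge_atTop 1] with n hn hn1
  rw [← Nat.cast_le (α := ℝ)]
  simp only [Nat.cast_mul, Nat.cast_pow, Nat.cast_ofNat, ← Real.rpow_natCast]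
  refine le_trans ?_ hn
  have h2n : (1:ℝ) ≤ 2 * n := by
    have : (1:ℝ) ≤ (n:ℝ) := by exact_mod_cast hn1
    linarith
  gcongr
  · exact_mod_cast Real.nat_sqrt_le_real_sqrt
  · norm_num1
  · exact Nat.cast_div_le.trans (by norm_cast)
  · rw [Real.rpow_natCast]

lemma prime_count_eventual (c : ℕ) : ∀ᶠ n : ℕ in atTop,
    Nat.primeCounting n + c < Nat.primeCounting (2*n) := by
  filter_upwards [nat_eventual (c+1), eventually_ge_atTop 512] with n h1 h2
  rw [pc_split n]
  have hkey : c < tprime n := by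
    by_contra hc
    push_neg at hc
    have H2 : 4 ^ n < n * Nat.centralBinom n := Nat.four_pow_lt_mul_centralBinom n (by omega)
    have H3 := centralBinom_le_tprime n (by omega)
    have H4 : (2*n) ^ tprime n * (2*n) ≤ (2*n) ^ (c+1) :=
      by calc (2*n) ^ tprime n * (2*n) = (2*n) ^ (tprime n + 1) := by ring
            _ ≤ (2*n) ^ (c+1) := Nat.pow_le_pow_right (by omega) (by omega)
    have : 4 ^ n < 4 ^ n := by
      calc 4 ^ n < n * Nat.centralBinom n := H2
        _ ≤ n * ((2*n) ^ Nat.sqrt (2*n) * 4 ^ (2*n/3) * (2*n) ^ tprime n) :=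
            Nat.mul_le_mul_left n H3
        _ ≤ n * ((2*n) ^ Nat.sqrt (2*n) * 4 ^ (2*n/3) * (2*n) ^ (c+1)) := by
            refine Nat.mul_le_mul_left n (Nat.mul_le_mul_left _ ?_)
            exact le_trans (Nat.le_mul_of_pos_right _ (by omega)) H4
        _ = n * (2*n) ^ Nat.sqrt (2*n) * 4 ^ (2*n/3) * (2*n) ^ (c+1) := by ring
        _ ≤ 4 ^ n := h1
    omega
  omega

end RamanujanAux

section RamanujanAux2
open Real Filter

lemma pi'_half (m : ℕ) {x : ℝ} (h1 : (m:ℝ) ≤ x) (h2 : x < (m:ℝ) + 1) :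
    pi' x = Nat.primeCounting m ∧ pi' (x/2) = Nat.primeCounting (m/2) := by
  have hx0 : (0:ℝ) ≤ x := le_trans (by positivity) h1
  have hfl : ⌊x⌋₊ = m := by
    rw [Nat.floor_eq_iff hx0]; exact ⟨h1, h2⟩
  constructor
  · rw [pi', hfl]
  · rw [pi', show (2:ℝ) = ((2:ℕ):ℝ) by norm_num, Nat.floor_div_natCast, hfl]

lemma rp_set_nonempty (n : ℕ) :
    {R : ℕ | 0 < R ∧ ∀ x : ℝ, (R : ℝ) ≤ x → n ≤ pi' x - pi' (x / 2)}.Nonempty := by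
  obtain ⟨N₀, hN₀⟩ := Filter.eventually_atTop.mp (prime_count_eventual n)
  refine ⟨2*N₀+2, by omega, fun x hx => ?_⟩
  have hfl : 2*N₀+2 ≤ ⌊x⌋₊ := Nat.le_floor hx
  set m := ⌊x⌋₊ with hm
  have hx0 : (0:ℝ) ≤ x := le_trans (by positivity) hx
  have hhalf : pi' (x/2) = Nat.primeCounting (m/2) := by
    rw [pi', show (2:ℝ) = ((2:ℕ):ℝ) by norm_num, Nat.floor_div_natCast]
  have hfull : pi' x = Nat.primeCounting m := rfl
  have h1 : Nat.primeCounting (m/2) + n < Nat.primeCounting (2*(m/2)) := hN₀ (m/2) (by omega)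
  have h2 : Nat.primeCounting (2*(m/2)) ≤ Nat.primeCounting m :=
    Nat.monotone_primeCounting (by omega)
  rw [hfull, hhalf]
  omega

lemma rp_spec (n : ℕ) : 0 < ramanujanPrime n ∧
    ∀ x : ℝ, (ramanujanPrime n : ℝ) ≤ x → n ≤ pi' x - pi' (x / 2) :=
  Nat.sInf_mem (rp_set_nonempty n)

lemma rp_mono : Monotone ramanujanPrime := by
  intro a b hab
  refine Nat.sInf_le ⟨(rp_spec b).1, fun x hx => le_trans hab ((rp_spec b).2 x hx)⟩

lemma rp_zero : ramanujanPrime 0 = 1 := by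
  have h1 : ramanujanPrime 0 ≤ 1 :=
    Nat.sInf_le ⟨one_pos, fun x _ => Nat.zero_le _⟩
  have h2 := (rp_spec 0).1
  omega

lemma rp_one : 2 ≤ ramanujanPrime 1 := by
  by_contra h
  push_neg at h
  obtain ⟨hpos, hall⟩ := rp_spec 1
  have h1 : ramanujanPrime 1 = 1 := by omega
  have := hall 1 (by rw [h1]; norm_num)
  have hp1 : pi' 1 = 0 := by
    rw [pi', show ⌊(1:ℝ)⌋₊ = 1 by norm_num, Nat.primeCounting_one]
  omega

lemma pi'_pred {R : ℕ} (h2 : 2 ≤ R) :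
    Nat.primeCounting R ≤ Nat.primeCounting (R-1) + 1 ∧
      Nat.primeCounting ((R-1)/2) ≤ Nat.primeCounting (R/2) := by
  constructor
  · have : Nat.primeCounting R = Nat.primeCounting (R-1) + (if Nat.Prime R then 1 else 0) := by
      unfold Nat.primeCounting Nat.primeCounting'
      rw [show R - 1 + 1 = R by omega, Nat.count_succ]
    split at this <;> omega
  · exact Nat.monotone_primeCounting (by omega)

lemma rp_succ_lt (n : ℕ) (hn : 1 ≤ n) : ramanujanPrime n < ramanujanPrime (n+1) := by
  set R := ramanujanPrime (n+1) with hR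
  have hRge2 : 2 ≤ R := le_trans rp_one (rp_mono (by omega))
  obtain ⟨-, hall⟩ := rp_spec (n+1)
  have hmem : (R - 1) ∈ {S : ℕ | 0 < S ∧ ∀ x : ℝ, (S : ℝ) ≤ x → n ≤ pi' x - pi' (x / 2)} := by
    refine ⟨by omega, fun x hx => ?_⟩
    rcases le_or_gt (R:ℝ) x with hxR | hxR
    · have := hall x hxR; omega
    · -- R - 1 ≤ x < R
      have hc : ((R-1:ℕ):ℝ) = (R:ℝ) - 1 := by
        push_cast [Nat.cast_sub (by omega : 1 ≤ R)]; ring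
      have hfb : ((R-1:ℕ):ℝ) + 1 = (R:ℝ) := by rw [hc]; ring
      obtain ⟨e1, e2⟩ := pi'_half (R-1) hx (by rw [← hfb] at hxR; exact hxR)
      obtain ⟨e3, e4⟩ := pi'_half R le_rfl (by norm_num)
      have hspec := hall (R:ℝ) le_rfl
      rw [e3, e4] at hspec
      have hmon : Nat.primeCounting (R/2) ≤ Nat.primeCounting R :=
        Nat.monotone_primeCounting (by omega)
      obtain ⟨p1, p2⟩ := pi'_pred hRge2
      rw [e1, e2]
      omega
  calc ramanujanPrime n ≤ R - 1 := Nat.sInf_le hmem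
    _ < R := by omega

lemma rp_strict {a b : ℕ} (h : a < b) : ramanujanPrime a < ramanujanPrime b := by
  rcases Nat.eq_zero_or_pos a with rfl | ha
  · calc ramanujanPrime 0 = 1 := rp_zero
      _ < 2 := one_lt_two
      _ ≤ ramanujanPrime 1 := rp_one
      _ ≤ ramanujanPrime b := rp_mono (by omega)
  · calc ramanujanPrime a < ramanujanPrime (a+1) := rp_succ_lt a ha
      _ ≤ ramanujanPrime b := rp_mono (by omega)

lemma piR_le {j : ℕ} (hj : 1 ≤ j) {x : ℝ} (hx : x < ramanujanPrime j) : piR x ≤ j - 1 := by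
  have hsub : {R : ℕ | IsRamanujanPrime R ∧ (R:ℝ) ≤ x} ⊆ ramanujanPrime '' Set.Icc 1 (j-1) := by
    rintro R ⟨⟨n, hn1, rfl⟩, hle⟩
    refine ⟨n, ⟨hn1, ?_⟩, rfl⟩
    by_contra hcon
    push_neg at hcon
    have h1 : ramanujanPrime j ≤ ramanujanPrime n := rp_mono (by omega)
    have h2 : ((ramanujanPrime j : ℕ):ℝ) ≤ x :=
      le_trans (Nat.cast_le.mpr h1) hle
    linarith
  calc piR x ≤ (ramanujanPrime '' Set.Icc 1 (j-1)).ncard :=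
        Set.ncard_le_ncard hsub ((Set.finite_Icc _ _).image _)
    _ ≤ (Set.Icc 1 (j-1)).ncard := Set.ncard_image_le (Set.finite_Icc _ _)
    _ = j - 1 := by rw [← Finset.coe_Icc, Set.ncard_coe_finset, Nat.card_Icc]; omega

lemma piR_ge {j : ℕ} {x : ℝ} (hx : (ramanujanPrime j : ℝ) ≤ x) : j ≤ piR x := by
  rcases Nat.eq_zero_or_pos j with rfl | hj
  · exact Nat.zero_le _
  have himg : ramanujanPrime '' Set.Icc 1 j ⊆ {R : ℕ | IsRamanujanPrime R ∧ (R : ℝ) ≤ x} := by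
    rintro R ⟨n, ⟨h1, h2⟩, rfl⟩
    exact ⟨⟨n, h1, rfl⟩, le_trans (Nat.cast_le.mpr (rp_mono h2)) hx⟩
  have hfin : {R : ℕ | IsRamanujanPrime R ∧ (R : ℝ) ≤ x}.Finite := by
    refine Set.Finite.subset (Set.finite_Iic ⌊x⌋₊) ?_
    rintro R ⟨-, hle⟩
    exact Nat.le_floor hle
  have hinj : Set.InjOn ramanujanPrime (Set.Icc 1 j) := by
    intro a _ b _ hab
    by_contra hne
    rcases lt_or_gt_of_ne hne with h | h
    · exact absurd hab (rp_strict h).ne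
    · exact absurd hab.symm (rp_strict h).ne
  calc j = (Set.Icc 1 j).ncard := by rw [← Finset.coe_Icc, Set.ncard_coe_finset, Nat.card_Icc]; omega
    _ = (ramanujanPrime '' Set.Icc 1 j).ncard := (Set.ncard_image_of_injOn hinj).symm
    _ ≤ _ := Set.ncard_le_ncard himg hfin

end RamanujanAux2

theorem ramanujan_segal_equivalence (k l : ℕ) (hk : 1 ≤ k) (hl : 1 ≤ l) :
    ramanujanPrime k + ramanujanPrime l ≤ ramanujanPrime (k + l - 1) ↔
      ∀ x y : ℝ, (ramanujanPrime (k - 1) : ℝ) ≤ x → x < ramanujanPrime k →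
        (ramanujanPrime (l - 1) : ℝ) ≤ y → y < ramanujanPrime l →
          piR (x + y) ≤ piR x + piR y := by
  constructor
  · intro h x y hx1 hx2 hy1 hy2
    have hxk : k - 1 ≤ piR x := piR_ge hx1
    have hyl : l - 1 ≤ piR y := piR_ge hy1
    have hxy : x + y < (ramanujanPrime (k + l - 1) : ℝ) := by
      have hc : ((ramanujanPrime k : ℝ) + ramanujanPrime l) ≤ (ramanujanPrime (k+l-1) : ℝ) := by
        exact_mod_cast h
      linarith
    have hup : piR (x + y) ≤ (k + l - 1) - 1 := piR_le (by omega) hxy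
    omega
  · intro h
    have hk1 : ramanujanPrime (k-1) < ramanujanPrime k := rp_strict (by omega)
    have hl1 : ramanujanPrime (l-1) < ramanujanPrime l := rp_strict (by omega)
    set a := ramanujanPrime k with ha
    set b := ramanujanPrime l with hb
    have hx1 : (ramanujanPrime (k-1) : ℝ) ≤ (a:ℝ) - 1/2 := by
      have h' : ramanujanPrime (k-1) + 1 ≤ a := hk1
      have : (ramanujanPrime (k-1) : ℝ) + 1 ≤ (a:ℝ) := by exact_mod_cast h'
      linarith
    have hx2 : (a:ℝ) - 1/2 < (a:ℝ) := by linarith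
    have hy1 : (ramanujanPrime (l-1) : ℝ) ≤ (b:ℝ) - 1/2 := by
      have h' : ramanujanPrime (l-1) + 1 ≤ b := hl1
      have : (ramanujanPrime (l-1) : ℝ) + 1 ≤ (b:ℝ) := by exact_mod_cast h'
      linarith
    have hy2 : (b:ℝ) - 1/2 < (b:ℝ) := by linarith
    have hmain := h ((a:ℝ) - 1/2) ((b:ℝ) - 1/2) hx1 hx2 hy1 hy2
    have hpx : piR ((a:ℝ) - 1/2) ≤ k - 1 := piR_le hk hx2
    have hpy : piR ((b:ℝ) - 1/2) ≤ l - 1 := piR_le hl hy2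
    by_contra hcon
    push_neg at hcon
    have hle : (ramanujanPrime (k+l-1) : ℝ) ≤ ((a:ℝ) - 1/2) + ((b:ℝ) - 1/2) := by
      have h' : ramanujanPrime (k+l-1) + 1 ≤ a + b := hcon
      have : (ramanujanPrime (k+l-1) : ℝ) + 1 ≤ (a:ℝ) + (b:ℝ) := by exact_mod_cast h'
      linarith
    have hgz := piR_ge hle
    omega
end
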